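/- Let A, B, Q, R, P be real matrices with Q, R, P symmetric, M₃ = R + BᵀPB invertible, P satisfying the DARE, and K = −(R + BᵀPB)⁻¹BᵀPA. Fix N ≥ 1, an initial state x₀ ∈ ℝⁿ, and any control sequence u₀, …, u_{N−1} ∈ ℝᵐ, and let the predicted trajectory be x̂₀ = x₀, x̂_{k+1} = A x̂_k + B u_k. Then the finite-horizon cost with terminal cost P satisfies the exact telescoping identity ∑_{k=0}^{N−1} (x̂_kᵀ Q x̂_k + u_kᵀ R u_k) + x̂_Nᵀ P x̂_N = x₀ᵀ P x₀ + ∑_{k=0}^{N−1} (u_k − K x̂_k)ᵀ M₃ (u_k − K x̂_k). Consequently, if M₃ is positive semidefinite, the cost is at least x₀ᵀPx₀ for every control sequence, with equality when u_k = K x̂_k for all k; i.e., the finite-horizon problem with terminal cost P is infinite-horizon optimal for every horizon N. -/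

import Mathlib

open Matrix Finset

private lemma mulVec_dot' {a b : ℕ} (C : Matrix (Fin a) (Fin b) ℝ) (x : Fin b → ℝ)
    (z : Fin a → ℝ) : (C *ᵥ x) ⬝ᵥ z = x ⬝ᵥ (Cᵀ *ᵥ z) := by
  rw [dotProduct_mulVec, ← vecMul_transpose, ← dotProduct_mulVec]

theorem dare_finite_horizon_telescoping {n m : ℕ}
    (A : Matrix (Fin n) (Fin n) ℝ) (B : Matrix (Fin n) (Fin m) ℝ)
    (Q P : Matrix (Fin n) (Fin n) ℝ) (R : Matrix (Fin m) (Fin m) ℝ)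
    (hQ : Q.IsSymm) (hR : R.IsSymm) (hP : P.IsSymm)
    (hinv : IsUnit (R + Bᵀ * P * B))
    (hDARE : P = Aᵀ * P * A - Aᵀ * P * B * (R + Bᵀ * P * B)⁻¹ * (Bᵀ * P * A) + Q)
    (K : Matrix (Fin m) (Fin n) ℝ)
    (hK : K = -((R + Bᵀ * P * B)⁻¹ * (Bᵀ * P * A)))
    (N : ℕ) (hN : 1 ≤ N) (x₀ : Fin n → ℝ)
    (u : ℕ → Fin m → ℝ) (xhat : ℕ → Fin n → ℝ)
    (hx0 : xhat 0 = x₀)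
    (hdyn : ∀ k < N, xhat (k + 1) = A.mulVec (xhat k) + B.mulVec (u k)) :
    (∑ k ∈ range N, (xhat k ⬝ᵥ Q.mulVec (xhat k) + u k ⬝ᵥ R.mulVec (u k)) +
        xhat N ⬝ᵥ P.mulVec (xhat N) =
      x₀ ⬝ᵥ P.mulVec x₀ +
        ∑ k ∈ range N,
          (u k - K.mulVec (xhat k)) ⬝ᵥ
            (R + Bᵀ * P * B).mulVec (u k - K.mulVec (xhat k))) ∧
    ((R + Bᵀ * P * B).PosSemidef →
      (x₀ ⬝ᵥ P.mulVec x₀ ≤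
        ∑ k ∈ range N, (xhat k ⬝ᵥ Q.mulVec (xhat k) + u k ⬝ᵥ R.mulVec (u k)) +
          xhat N ⬝ᵥ P.mulVec (xhat N)) ∧
      ((∀ k < N, u k = K.mulVec (xhat k)) →
        ∑ k ∈ range N, (xhat k ⬝ᵥ Q.mulVec (xhat k) + u k ⬝ᵥ R.mulVec (u k)) +
            xhat N ⬝ᵥ P.mulVec (xhat N) =
          x₀ ⬝ᵥ P.mulVec x₀)) := by
  set M : Matrix (Fin m) (Fin m) ℝ := R + Bᵀ * P * B with hM
  have hdet : IsUnit M.det := (isUnit_iff_isUnit_det M).mp hinv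
  have hMM : M * M⁻¹ = 1 := mul_nonsing_inv M hdet
  have hMsym : Mᵀ = M := by
    simp [hM, transpose_add, transpose_mul, transpose_transpose, hR.eq, hP.eq,
      Matrix.mul_assoc]
  have f1 : M * K = -(Bᵀ * P * A) := by
    rw [hK, Matrix.mul_neg, ← Matrix.mul_assoc, hMM, Matrix.one_mul]
  have f2 : Kᵀ * M = -(Aᵀ * P * B) := by
    have := congrArg transpose f1
    simp only [transpose_mul, transpose_neg, hMsym, transpose_transpose, hP.eq] at this
    rw [this]
    simp [Matrix.mul_assoc]
  have hMinv : M⁻¹ᵀ = M⁻¹ := by rw [transpose_nonsing_inv, hMsym]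
  have fKMK : Kᵀ * M * K = Aᵀ * P * A + Q - P := by
    have hKt : Kᵀ = -(Aᵀ * P * B * M⁻¹) := by
      rw [hK]
      simp only [transpose_neg, transpose_mul, hMinv, transpose_transpose, hP.eq]
      simp [Matrix.mul_assoc]
    have : Kᵀ * M * K = Aᵀ * P * B * M⁻¹ * (Bᵀ * P * A) := by
      rw [Matrix.mul_assoc, f1, hKt]
      simp only [Matrix.neg_mul, Matrix.mul_neg, neg_neg]
    rw [this]
    calc Aᵀ * P * B * M⁻¹ * (Bᵀ * P * A)
        = Aᵀ * P * A + Q -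
            (Aᵀ * P * A - Aᵀ * P * B * M⁻¹ * (Bᵀ * P * A) + Q) := by abel
      _ = Aᵀ * P * A + Q - P := by rw [← hDARE]
  -- per-step identity
  have key : ∀ (x : Fin n → ℝ) (v : Fin m → ℝ),
      x ⬝ᵥ Q *ᵥ x + v ⬝ᵥ R *ᵥ v +
          (A *ᵥ x + B *ᵥ v) ⬝ᵥ P *ᵥ (A *ᵥ x + B *ᵥ v)
        = x ⬝ᵥ P *ᵥ x + (v - K *ᵥ x) ⬝ᵥ M *ᵥ (v - K *ᵥ x) := by
    intro x v
    have e1 : (A *ᵥ x + B *ᵥ v) ⬝ᵥ P *ᵥ (A *ᵥ x + B *ᵥ v)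
        = x ⬝ᵥ (Aᵀ * P * A) *ᵥ x + x ⬝ᵥ (Aᵀ * P * B) *ᵥ v
          + v ⬝ᵥ (Bᵀ * P * A) *ᵥ x + v ⬝ᵥ (Bᵀ * P * B) *ᵥ v := by
      simp only [mulVec_add, dotProduct_add, add_dotProduct, mulVec_dot',
        mulVec_mulVec, Matrix.mul_assoc]
      ring
    have e2 : (v - K *ᵥ x) ⬝ᵥ M *ᵥ (v - K *ᵥ x)
        = v ⬝ᵥ M *ᵥ v - v ⬝ᵥ (M * K) *ᵥ x - x ⬝ᵥ (Kᵀ * M) *ᵥ v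
          + x ⬝ᵥ (Kᵀ * M * K) *ᵥ x := by
      simp only [mulVec_sub, dotProduct_sub, sub_dotProduct, mulVec_dot',
        mulVec_mulVec, Matrix.mul_assoc]
      ring
    rw [e1, e2, fKMK, f1, f2, hM]
    simp only [neg_mulVec, dotProduct_neg, add_mulVec, sub_mulVec, dotProduct_add,
      dotProduct_sub]
    ring
  have main : ∀ N' : ℕ, (∀ k < N', xhat (k + 1) = A *ᵥ xhat k + B *ᵥ u k) →
      ∑ k ∈ range N', (xhat k ⬝ᵥ Q *ᵥ xhat k + u k ⬝ᵥ R *ᵥ u k) +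
          xhat N' ⬝ᵥ P *ᵥ xhat N'
        = xhat 0 ⬝ᵥ P *ᵥ xhat 0 +
          ∑ k ∈ range N', (u k - K *ᵥ xhat k) ⬝ᵥ M *ᵥ (u k - K *ᵥ xhat k) := by
    intro N'
    induction N' with
    | zero => intro _; simp
    | succ N' ih =>
      intro hd
      have ih' := ih (fun k hk => hd k (Nat.lt_succ_of_lt hk))
      rw [sum_range_succ, sum_range_succ, hd N' (Nat.lt_succ_self N')]
      have := key (xhat N') (u N')
      linarith
  have part1 := main N hdyn
  rw [hx0] at part1
  refine ⟨part1, fun hPSD => ?_⟩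
  constructor
  · have hnn : 0 ≤ ∑ k ∈ range N,
        (u k - K *ᵥ xhat k) ⬝ᵥ M *ᵥ (u k - K *ᵥ xhat k) :=
      Finset.sum_nonneg fun k _ => by simpa using hPSD.dotProduct_mulVec_nonneg (u k - K *ᵥ xhat k)
    linarith
  · intro hopt
    have hz : ∑ k ∈ range N,
        (u k - K *ᵥ xhat k) ⬝ᵥ M *ᵥ (u k - K *ᵥ xhat k) = 0 := by
      refine Finset.sum_eq_zero fun k hk => ?_
      rw [hopt k (mem_range.mp hk)]
      simp
    rw [part1, hz, add_zero]
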